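/- arXiv:1711.05220 — 9 statements merged into one kernel-verified Lean document; each statement's English description precedes it below -/
import Mathlib

section
/- Let N ≤ L and let M ∈ ℂ^{N×L} admit a singular value decomposition M = U Σ Vᴴ, where U is an N×N unitary matrix, V is an L×L unitary matrix, and Σ is a real N×L matrix with Σ_{ij} = 0 for i ≠ j and Σ_{ii} ≥ 0 for all i. Then for every X ∈ ℂ^{N×L} with X Xᴴ = I_N one has Re tr(Xᴴ M) ≤ ∑_{i=1}^{N} Σ_{ii}; moreover the matrix X* = U I_{N×L} Vᴴ satisfies X* X*ᴴ = I_N and achieves equality, Re tr(X*ᴴ M) = ∑_{i=1}^{N} Σ_{ii}. -/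
open Matrix

/-- The `N × L` rectangular "identity": ones on the main diagonal, zeros elsewhere. -/
def rectId (N L : ℕ) : Matrix (Fin N) (Fin L) ℂ :=
  Matrix.of fun i j => if (i : ℕ) = (j : ℕ) then 1 else 0

theorem stmt1 {N L : ℕ} (hNL : N ≤ L) (M : Matrix (Fin N) (Fin L) ℂ)
    (U : Matrix (Fin N) (Fin N) ℂ) (V : Matrix (Fin L) (Fin L) ℂ)
    (Sig : Matrix (Fin N) (Fin L) ℝ)
    (hU₁ : U * Uᴴ = 1) (hU₂ : Uᴴ * U = 1)
    (hV₁ : V * Vᴴ = 1) (hV₂ : Vᴴ * V = 1)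
    (hSigOff : ∀ (i : Fin N) (j : Fin L), (i : ℕ) ≠ (j : ℕ) → Sig i j = 0)
    (hSigDiag : ∀ i : Fin N, 0 ≤ Sig i (Fin.castLE hNL i))
    (hSVD : M = U * Sig.map (fun x => (x : ℂ)) * Vᴴ) :
    (∀ X : Matrix (Fin N) (Fin L) ℂ, X * Xᴴ = 1 →
      (Matrix.trace (Xᴴ * M)).re ≤ ∑ i : Fin N, Sig i (Fin.castLE hNL i)) ∧
    (U * rectId N L * Vᴴ) * (U * rectId N L * Vᴴ)ᴴ = 1 ∧
    (Matrix.trace ((U * rectId N L * Vᴴ)ᴴ * M)).re = ∑ i : Fin N, Sig i (Fin.castLE hNL i) := by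
  set S : Matrix (Fin N) (Fin L) ℂ := Sig.map (fun x => (x : ℂ)) with hS
  -- trace identity
  have htr : ∀ X : Matrix (Fin N) (Fin L) ℂ,
      Matrix.trace (Xᴴ * M) = Matrix.trace ((Uᴴ * X * V)ᴴ * S) := by
    intro X
    rw [hSVD]
    simp only [conjTranspose_mul, conjTranspose_conjTranspose]
    rw [← Matrix.mul_assoc, Matrix.trace_mul_comm]
    simp only [Matrix.mul_assoc]
  -- trace against S is the diagonal sum
  have key : ∀ Y : Matrix (Fin N) (Fin L) ℂ,
      Matrix.trace (Yᴴ * S) =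
        ∑ i : Fin N, star (Y i (Fin.castLE hNL i)) * (Sig i (Fin.castLE hNL i) : ℂ) := by
    intro Y
    rw [Matrix.trace_mul_comm, Matrix.trace]
    refine Finset.sum_congr rfl fun i _ => ?_
    rw [Matrix.diag_apply, Matrix.mul_apply]
    rw [Finset.sum_eq_single (Fin.castLE hNL i)]
    · simp [hS, Matrix.conjTranspose_apply, mul_comm]
    · intro j _ hj
      have : (i : ℕ) ≠ (j : ℕ) := by
        intro h; apply hj; ext; simp [h]
      simp [hS, hSigOff i j this]
    · intro h; exact absurd (Finset.mem_univ _) h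
  refine ⟨?_, ?_, ?_⟩
  · intro X hX
    set Y := Uᴴ * X * V with hY
    have hYY : Y * Yᴴ = 1 := by
      rw [hY]
      simp only [conjTranspose_mul, conjTranspose_conjTranspose, Matrix.mul_assoc]
      rw [show Vᴴ * (Xᴴ * U) = Vᴴ * Xᴴ * U from (Matrix.mul_assoc _ _ _).symm]
      rw [show V * (Vᴴ * Xᴴ * U) = (V * Vᴴ) * (Xᴴ * U) by
        simp only [Matrix.mul_assoc]]
      rw [hV₁, Matrix.one_mul]
      rw [show X * (Xᴴ * U) = (X * Xᴴ) * U from (Matrix.mul_assoc _ _ _).symm]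
      rw [hX, Matrix.one_mul, hU₂]
    have hrow : ∀ i : Fin N, ∑ j : Fin L, Complex.normSq (Y i j) = 1 := by
      intro i
      have h1 : (Y * Yᴴ) i i = 1 := by rw [hYY]; simp [Matrix.one_apply]
      rw [Matrix.mul_apply] at h1
      have h2 : ∑ j : Fin L, ((Complex.normSq (Y i j) : ℂ)) = 1 := by
        rw [← h1]
        refine Finset.sum_congr rfl fun j _ => ?_
        simp [Matrix.conjTranspose_apply, Complex.star_def, Complex.mul_conj]
      have := congrArg Complex.re h2
      simpa [Complex.re_sum] using this
    rw [htr X, key (Uᴴ * X * V)]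
    rw [Complex.re_sum]
    apply Finset.sum_le_sum
    intro i _
    have habs : ‖Y i (Fin.castLE hNL i)‖ ≤ 1 := by
      have h1 : Complex.normSq (Y i (Fin.castLE hNL i)) ≤ 1 := by
        rw [← hrow i]
        exact Finset.single_le_sum (fun j _ => Complex.normSq_nonneg _) (Finset.mem_univ _)
      have := Complex.sq_norm (Y i (Fin.castLE hNL i))
      nlinarith [norm_nonneg (Y i (Fin.castLE hNL i))]
    have hre : (star (Y i (Fin.castLE hNL i)) * (Sig i (Fin.castLE hNL i) : ℂ)).re
        = (Y i (Fin.castLE hNL i)).re * Sig i (Fin.castLE hNL i) := by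
      simp [Complex.mul_re]
    rw [← hY, hre]
    calc (Y i (Fin.castLE hNL i)).re * Sig i (Fin.castLE hNL i)
        ≤ 1 * Sig i (Fin.castLE hNL i) := by
          apply mul_le_mul_of_nonneg_right _ (hSigDiag i)
          exact le_trans (Complex.re_le_norm _) habs
      _ = Sig i (Fin.castLE hNL i) := one_mul _
  · have hR : rectId N L * (rectId N L)ᴴ = (1 : Matrix (Fin N) (Fin N) ℂ) := by
      ext i k
      rw [Matrix.mul_apply]
      rw [Finset.sum_eq_single (Fin.castLE hNL i)]
      · simp [rectId, Matrix.conjTranspose_apply, Matrix.one_apply, Fin.ext_iff, eq_comm]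
      · intro j _ hj
        have : (i : ℕ) ≠ (j : ℕ) := by
          intro h; apply hj; ext; simp [h]
        simp [rectId, this]
      · intro h; exact absurd (Finset.mem_univ _) h
    simp only [conjTranspose_mul, conjTranspose_conjTranspose, Matrix.mul_assoc]
    rw [show Vᴴ * (V * ((rectId N L)ᴴ * Uᴴ)) = (Vᴴ * V) * ((rectId N L)ᴴ * Uᴴ) by
      simp only [Matrix.mul_assoc]]
    rw [hV₂, Matrix.one_mul]
    rw [show rectId N L * ((rectId N L)ᴴ * Uᴴ) = (rectId N L * (rectId N L)ᴴ) * Uᴴ from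
      (Matrix.mul_assoc _ _ _).symm]
    rw [hR, Matrix.one_mul, hU₁]
  · rw [htr, key]
    have hYR : Uᴴ * (U * rectId N L * Vᴴ) * V = rectId N L := by
      simp only [Matrix.mul_assoc]
      rw [show Vᴴ * V = 1 from hV₂]
      rw [Matrix.mul_one]
      rw [show Uᴴ * (U * rectId N L) = (Uᴴ * U) * rectId N L from (Matrix.mul_assoc _ _ _).symm]
      rw [hU₂, Matrix.one_mul]
    rw [hYR]
    have : ∀ i : Fin N, star (rectId N L i (Fin.castLE hNL i)) = (1 : ℂ) := by
      intro i; simp [rectId]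
    rw [Complex.re_sum]
    refine Finset.sum_congr rfl fun i _ => ?_
    rw [this i, one_mul, Complex.ofReal_re]
end

section
/- Let H ∈ ℂ^{K×N}, S ∈ ℂ^{K×L} with N ≤ L, and let P_T > 0, L > 0. Suppose Hᴴ S admits a singular value decomposition Hᴴ S = U Σ Vᴴ with U an N×N unitary matrix, V an L×L unitary matrix, and Σ a real N×L matrix with Σ_{ij} = 0 for i ≠ j and Σ_{ii} ≥ 0. Then X* = √(L·P_T/N) · U I_{N×L} Vᴴ satisfies (1/L) X* X*ᴴ = (P_T/N) I_N, and for every X ∈ ℂ^{N×L} with (1/L) X Xᴴ = (P_T/N) I_N one has ‖H X* − S‖_F ≤ ‖H X − S‖_F. That is, X* is a global minimizer of the MUI energy ‖HX − S‖_F² under the omnidirectional (orthogonal waveform) constraint. -/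
open Matrix

/-- Squared Frobenius norm of a complex matrix: `‖M‖_F² = Re tr(Mᴴ M)`. -/
noncomputable def frobSq {m n : ℕ} (M : Matrix (Fin m) (Fin n) ℂ) : ℝ :=
  (Matrix.trace (Mᴴ * M)).re

/-- Frobenius norm. -/
noncomputable def frobNorm {m n : ℕ} (M : Matrix (Fin m) (Fin n) ℂ) : ℝ :=
  Real.sqrt (frobSq M)

lemma rectId_mul_ct {N L : ℕ} (hNL : N ≤ L) : rectId N L * (rectId N L)ᴴ = 1 := by
  ext i j
  simp only [mul_apply, conjTranspose_apply, rectId, of_apply, one_apply]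
  rw [Finset.sum_eq_single (Fin.castLE hNL i)]
  · by_cases h : i = j <;> simp [h, Fin.ext_iff]
    · intro hij; exact h (Fin.ext (by omega))
  · intro k _ hk
    have : (i:ℕ) ≠ (k:ℕ) := fun h => hk (by ext; simp [← h])
    simp [this]
  · simp

lemma frobSq_expand {K N L : ℕ} (H : Matrix (Fin K) (Fin N) ℂ) (S : Matrix (Fin K) (Fin L) ℂ)
    (X : Matrix (Fin N) (Fin L) ℂ) (r : ℝ) (hX : X * Xᴴ = (r:ℂ) • 1) :
    frobSq (H * X - S) = r * (trace (Hᴴ * H)).re + frobSq S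
      - 2 * (trace (Xᴴ * (Hᴴ * S))).re := by
  have e1 : (H * X - S)ᴴ * (H * X - S)
      = Xᴴ * Hᴴ * (H * X) - Xᴴ * (Hᴴ * S) - Sᴴ * (H * X) + Sᴴ * S := by
    rw [conjTranspose_sub, conjTranspose_mul, Matrix.sub_mul, Matrix.mul_sub, Matrix.mul_sub]
    rw [Matrix.mul_assoc Xᴴ Hᴴ (H * X), Matrix.mul_assoc Xᴴ Hᴴ S,
        ← Matrix.mul_assoc Hᴴ H X]
    abel
  have t1 : trace (Xᴴ * Hᴴ * (H * X)) = (r:ℂ) * trace (Hᴴ * H) := by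
    rw [show Xᴴ * Hᴴ * (H * X) = (Xᴴ * (Hᴴ * H)) * X by
          simp only [Matrix.mul_assoc],
        trace_mul_comm, ← Matrix.mul_assoc, hX, Matrix.smul_mul, trace_smul,
        Matrix.one_mul, smul_eq_mul]
  have t2 : (trace (Sᴴ * (H * X))).re = (trace (Xᴴ * (Hᴴ * S))).re := by
    have : Sᴴ * (H * X) = (Xᴴ * (Hᴴ * S))ᴴ := by
      simp [conjTranspose_mul, Matrix.mul_assoc]
    rw [this, trace_conjTranspose]
    simp
  simp only [frobSq, e1, trace_add, trace_sub, Complex.add_re, Complex.sub_re, t1]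
  rw [t2]
  simp [Complex.ofReal_mul, Complex.mul_re]
  ring

lemma trace_form {N L : ℕ} (hNL : N ≤ L) (Sig : Matrix (Fin N) (Fin L) ℝ)
    (hSigOff : ∀ (i : Fin N) (j : Fin L), (i : ℕ) ≠ (j : ℕ) → Sig i j = 0)
    (Y : Matrix (Fin N) (Fin L) ℂ) :
    trace (Yᴴ * Sig.map (fun x => (x : ℂ)))
      = ∑ i : Fin N, (starRingEnd ℂ) (Y i (Fin.castLE hNL i)) * (Sig i (Fin.castLE hNL i) : ℂ) := by
  simp only [trace, diag, mul_apply, conjTranspose_apply, map_apply]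
  rw [Finset.sum_comm]
  refine Finset.sum_congr rfl fun i _ => ?_
  rw [Finset.sum_eq_single (Fin.castLE hNL i)]
  · rfl
  · intro j _ hj
    have : (i : ℕ) ≠ (j : ℕ) := fun h => hj (by ext; simp [← h])
    simp [hSigOff i j this]
  · simp

lemma entry_bound {N L : ℕ} (Y : Matrix (Fin N) (Fin L) ℂ) (r c : ℝ) (hc : 0 ≤ c)
    (hc2 : c ^ 2 = r) (hY : Y * Yᴴ = (r : ℂ) • 1) (i : Fin N) (j : Fin L) :
    (Y i j).re ≤ c := by
  have hrow : ∑ k : Fin L, Complex.normSq (Y i k) = r := by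
    have := congrFun (congrFun hY i) i
    simp only [mul_apply, conjTranspose_apply, Matrix.smul_apply, one_apply_eq, smul_eq_mul,
      mul_one] at this
    have := congrArg Complex.re this
    simpa [Complex.mul_conj] using this
  have h1 : Complex.normSq (Y i j) ≤ r := by
    rw [← hrow]
    exact Finset.single_le_sum (fun k _ => Complex.normSq_nonneg _) (Finset.mem_univ j)
  calc (Y i j).re ≤ ‖Y i j‖ := Complex.re_le_norm _
    _ = Real.sqrt (Complex.normSq (Y i j)) := by rw [Complex.norm_def]
    _ ≤ Real.sqrt r := Real.sqrt_le_sqrt h1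
    _ = c := by rw [← hc2, Real.sqrt_sq hc]

lemma trace_re_bound {K N L : ℕ} (hNL : N ≤ L)
    (H : Matrix (Fin K) (Fin N) ℂ) (S : Matrix (Fin K) (Fin L) ℂ)
    (U : Matrix (Fin N) (Fin N) ℂ) (V : Matrix (Fin L) (Fin L) ℂ)
    (Sig : Matrix (Fin N) (Fin L) ℝ)
    (hU₂ : Uᴴ * U = 1) (hV₁ : V * Vᴴ = 1)
    (hSigOff : ∀ (i : Fin N) (j : Fin L), (i : ℕ) ≠ (j : ℕ) → Sig i j = 0)
    (hSVD : Hᴴ * S = U * Sig.map (fun x => (x : ℂ)) * Vᴴ)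
    (X : Matrix (Fin N) (Fin L) ℂ) :
    (trace (Xᴴ * (Hᴴ * S))).re
      = ∑ i : Fin N, Sig i (Fin.castLE hNL i) * ((Uᴴ * X * V) i (Fin.castLE hNL i)).re := by
  set Y := Uᴴ * X * V with hYdef
  have hYct : Yᴴ = Vᴴ * Xᴴ * U := by
    simp [hYdef, conjTranspose_mul, Matrix.mul_assoc]
  have e : trace (Xᴴ * (Hᴴ * S)) = trace (Yᴴ * Sig.map (fun x => (x : ℂ))) := by
    rw [hSVD, show Xᴴ * (U * Sig.map (fun x => (x:ℂ)) * Vᴴ)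
          = (Xᴴ * U * Sig.map (fun x => (x:ℂ))) * Vᴴ by simp [Matrix.mul_assoc],
        trace_mul_comm, hYct]
    simp [Matrix.mul_assoc]
  rw [e, trace_form hNL Sig hSigOff Y]
  simp [Complex.mul_re]
  rw [hYdef]
  exact Finset.sum_congr rfl fun i _ => mul_comm _ _

theorem stmt2 {K N L : ℕ} (hNL : N ≤ L) (hL : 0 < L) (P_T : ℝ) (hPT : 0 < P_T)
    (H : Matrix (Fin K) (Fin N) ℂ) (S : Matrix (Fin K) (Fin L) ℂ)
    (U : Matrix (Fin N) (Fin N) ℂ) (V : Matrix (Fin L) (Fin L) ℂ)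
    (Sig : Matrix (Fin N) (Fin L) ℝ)
    (hU₁ : U * Uᴴ = 1) (hU₂ : Uᴴ * U = 1)
    (hV₁ : V * Vᴴ = 1) (hV₂ : Vᴴ * V = 1)
    (hSigOff : ∀ (i : Fin N) (j : Fin L), (i : ℕ) ≠ (j : ℕ) → Sig i j = 0)
    (hSigDiag : ∀ i : Fin N, 0 ≤ Sig i (Fin.castLE hNL i))
    (hSVD : Hᴴ * S = U * Sig.map (fun x => (x : ℂ)) * Vᴴ) :
    (((L : ℂ))⁻¹ • ((Real.sqrt (L * P_T / N) • (U * rectId N L * Vᴴ)) *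
        (Real.sqrt (L * P_T / N) • (U * rectId N L * Vᴴ))ᴴ) = ((P_T / N : ℝ) : ℂ) • 1) ∧
    ∀ X : Matrix (Fin N) (Fin L) ℂ,
      ((L : ℂ))⁻¹ • (X * Xᴴ) = ((P_T / N : ℝ) : ℂ) • 1 →
      frobNorm (H * (Real.sqrt (L * P_T / N) • (U * rectId N L * Vᴴ)) - S) ≤
        frobNorm (H * X - S) := by
  set c : ℝ := Real.sqrt (L * P_T / N) with hcdef
  set r : ℝ := (L : ℝ) * P_T / N with hrdef
  have hrnn : 0 ≤ r := by positivity
  have hc : 0 ≤ c := Real.sqrt_nonneg _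
  have hc2 : c ^ 2 = r := Real.sq_sqrt hrnn
  set Xs : Matrix (Fin N) (Fin L) ℂ := c • (U * rectId N L * Vᴴ) with hXsdef
  have hLne : (L : ℂ) ≠ 0 := by exact_mod_cast Nat.cast_ne_zero.mpr hL.ne'
  -- Xs * Xsᴴ = r • 1
  have hXsXs : Xs * Xsᴴ = (r : ℂ) • 1 := by
    rw [hXsdef, conjTranspose_smul]
    have : (U * rectId N L * Vᴴ) * (U * rectId N L * Vᴴ)ᴴ = 1 := by
      rw [conjTranspose_mul, conjTranspose_mul, conjTranspose_conjTranspose]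
      calc U * rectId N L * Vᴴ * (V * ((rectId N L)ᴴ * Uᴴ))
          = U * (rectId N L * ((Vᴴ * V) * ((rectId N L)ᴴ * Uᴴ))) := by
            simp only [Matrix.mul_assoc]
        _ = U * (rectId N L * (rectId N L)ᴴ) * Uᴴ := by
            rw [hV₂]; simp only [Matrix.one_mul, Matrix.mul_assoc]
        _ = 1 := by rw [rectId_mul_ct hNL, Matrix.mul_one, hU₁]
    rw [Matrix.smul_mul, Matrix.mul_smul, this, star_trivial, smul_smul]
    ext i j
    simp only [Matrix.smul_apply, Complex.real_smul, smul_eq_mul, ← hc2]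
    push_cast
    ring
  constructor
  · rw [hXsXs]
    rw [smul_smul]
    congr 1
    rw [hrdef]
    push_cast
    field_simp
  · intro X hXc
    have hXX : X * Xᴴ = (r : ℂ) • 1 := by
      have := congrArg (fun M => (L : ℂ) • M) hXc
      simp only [smul_smul, mul_inv_cancel₀ hLne, one_smul] at this
      rw [this]
      congr 1
      rw [hrdef]
      push_cast
      ring
    -- the trace comparison
    have key : (trace (Xᴴ * (Hᴴ * S))).re ≤ (trace (Xsᴴ * (Hᴴ * S))).re := by
      rw [trace_re_bound hNL H S U V Sig hU₂ hV₁ hSigOff hSVD X,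
          trace_re_bound hNL H S U V Sig hU₂ hV₁ hSigOff hSVD Xs]
      apply Finset.sum_le_sum
      intro i _
      have hY : (Uᴴ * X * V) * (Uᴴ * X * V)ᴴ = (r : ℂ) • 1 := by
        rw [conjTranspose_mul, conjTranspose_mul, conjTranspose_conjTranspose]
        calc Uᴴ * X * V * (Vᴴ * (Xᴴ * U))
            = Uᴴ * (X * ((V * Vᴴ) * (Xᴴ * U))) := by simp only [Matrix.mul_assoc]
          _ = Uᴴ * (X * Xᴴ) * U := by rw [hV₁]; simp only [Matrix.one_mul, Matrix.mul_assoc]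
          _ = (r:ℂ) • 1 := by
              rw [hXX, Matrix.mul_smul, Matrix.smul_mul, Matrix.mul_one, hU₂]
      have hb := entry_bound (Uᴴ * X * V) r c hc hc2 hY i (Fin.castLE hNL i)
      have hXsY : Uᴴ * Xs * V = c • rectId N L := by
        rw [hXsdef, Matrix.mul_smul, Matrix.smul_mul]
        congr 1
        calc Uᴴ * (U * rectId N L * Vᴴ) * V
            = (Uᴴ * U) * (rectId N L * (Vᴴ * V)) := by simp only [Matrix.mul_assoc]
          _ = rectId N L := by rw [hU₂, hV₂, Matrix.one_mul, Matrix.mul_one]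
      rw [hXsY]
      have : ((c • rectId N L) i (Fin.castLE hNL i)).re = c := by
        simp [rectId]
      rw [this]
      exact mul_le_mul_of_nonneg_left hb (hSigDiag i)
    -- conclude via frobSq_expand
    have e1 := frobSq_expand H S Xs r hXsXs
    have e2 := frobSq_expand H S X r hXX
    unfold frobNorm
    apply Real.sqrt_le_sqrt
    rw [e1, e2]
    linarith
end

section
/- Let H ∈ ℂ^{K×N}, S ∈ ℂ^{K×L} with N ≤ L, and let R_d ∈ ℂ^{N×N} be Hermitian positive definite with a factorization R_d = F Fᴴ where F ∈ ℂ^{N×N} is invertible. Suppose Fᴴ Hᴴ S admits a singular value decomposition Fᴴ Hᴴ S = Ũ Σ̃ Ṽᴴ with Ũ an N×N unitary matrix, Ṽ an L×L unitary matrix, and Σ̃ a real N×L matrix with Σ̃_{ij} = 0 for i ≠ j and Σ̃_{ii} ≥ 0. Then X* = √L · F Ũ I_{N×L} Ṽᴴ satisfies (1/L) X* X*ᴴ = R_d, and for every X ∈ ℂ^{N×L} with (1/L) X Xᴴ = R_d one has ‖H X* − S‖_F ≤ ‖H X − S‖_F. That is, X* is a global minimizer of the MUI energy under the directional beampattern constraint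 (1/L) X Xᴴ = R_d. -/
open Matrix
open scoped ComplexOrder

lemma rectId_mul_conjT {N L : ℕ} (h : N ≤ L) :
    rectId N L * (rectId N L)ᴴ = (1 : Matrix (Fin N) (Fin N) ℂ) := by
  ext i j
  simp only [Matrix.mul_apply, rectId, conjTranspose_apply, Matrix.of_apply, Matrix.one_apply]
  rw [Finset.sum_eq_single (Fin.castLE h i)]
  · by_cases hij : i = j
    · simp [hij]
    · simp [Fin.val_eq_val, if_neg hij, eq_comm]
  · intro k _ hk
    have : ¬ ((i : ℕ) = (k : ℕ)) := by
      intro hik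
      exact hk (by ext; simp [← hik])
    simp [this]
  · simp

lemma mcl {n l m : ℕ} {P : Matrix (Fin n) (Fin l) ℂ} {Q : Matrix (Fin l) (Fin n) ℂ}
    (h : P * Q = 1) (A : Matrix (Fin n) (Fin m) ℂ) : P * (Q * A) = A := by
  rw [← Matrix.mul_assoc, h, Matrix.one_mul]

lemma frobSq_sub {K L : ℕ} (A S : Matrix (Fin K) (Fin L) ℂ) :
    frobSq (A - S) = frobSq A - 2 * (Matrix.trace (Sᴴ * A)).re + frobSq S := by
  have h : Matrix.trace (Aᴴ * S) = star (Matrix.trace (Sᴴ * A)) := by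
    rw [← Matrix.trace_conjTranspose]
    simp [conjTranspose_mul]
  simp only [frobSq, conjTranspose_sub, Matrix.sub_mul, Matrix.mul_sub, Matrix.trace_sub,
    Complex.sub_re, Complex.add_re, h, Complex.sub_re]
  simp [Complex.conj_re]
  ring

theorem stmt3 {K N L : ℕ} (hNL : N ≤ L)
    (H : Matrix (Fin K) (Fin N) ℂ) (S : Matrix (Fin K) (Fin L) ℂ)
    (Rd F : Matrix (Fin N) (Fin N) ℂ)
    (hRd : Rd.PosDef) (hF : IsUnit F) (hFact : Rd = F * Fᴴ)
    (U : Matrix (Fin N) (Fin N) ℂ) (V : Matrix (Fin L) (Fin L) ℂ)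
    (Sig : Matrix (Fin N) (Fin L) ℝ)
    (hU₁ : U * Uᴴ = 1) (hU₂ : Uᴴ * U = 1)
    (hV₁ : V * Vᴴ = 1) (hV₂ : Vᴴ * V = 1)
    (hSigOff : ∀ (i : Fin N) (j : Fin L), (i : ℕ) ≠ (j : ℕ) → Sig i j = 0)
    (hSigDiag : ∀ i : Fin N, 0 ≤ Sig i (Fin.castLE hNL i))
    (hSVD : Fᴴ * Hᴴ * S = U * Sig.map (fun x => (x : ℂ)) * Vᴴ) :
    (((L : ℂ))⁻¹ • ((Real.sqrt L • (F * U * rectId N L * Vᴴ)) *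
        (Real.sqrt L • (F * U * rectId N L * Vᴴ))ᴴ) = Rd) ∧
    ∀ X : Matrix (Fin N) (Fin L) ℂ,
      ((L : ℂ))⁻¹ • (X * Xᴴ) = Rd →
      frobNorm (H * (Real.sqrt L • (F * U * rectId N L * Vᴴ)) - S) ≤
        frobNorm (H * X - S) := by
  by_cases hL0 : L = 0
  · subst hL0
    have hN0 : N = 0 := Nat.le_zero.mp hNL
    subst hN0
    constructor
    · ext i j
      exact i.elim0
    · intro X _
      simp [frobNorm, frobSq, Matrix.trace]
  -- main case
  have hLpos : (0:ℝ) < L := by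
    exact_mod_cast Nat.pos_of_ne_zero hL0
  have hLc : (L:ℂ) ≠ 0 := Nat.cast_ne_zero.mpr hL0
  set Sg : Matrix (Fin N) (Fin L) ℂ := Sig.map (fun x => (x : ℂ)) with hSg
  set Xs : Matrix (Fin N) (Fin L) ℂ := Real.sqrt L • (F * U * rectId N L * Vᴴ) with hXs
  have hFd : IsUnit F.det := (Matrix.isUnit_iff_isUnit_det F).mp hF
  have hFi : F⁻¹ * F = 1 := Matrix.nonsing_inv_mul F hFd
  have hFi' : F * F⁻¹ = 1 := Matrix.mul_nonsing_inv F hFd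
  have hFHi : Fᴴ * F⁻¹ᴴ = 1 := by
    rw [← conjTranspose_mul, hFi, conjTranspose_one]
  have hFHi' : F⁻¹ᴴ * Fᴴ = 1 := by
    rw [← conjTranspose_mul, hFi', conjTranspose_one]
  -- Xs Xsᴴ = L • Rd
  have hMM : (F * U * rectId N L * Vᴴ) * (F * U * rectId N L * Vᴴ)ᴴ = F * Fᴴ := by
    simp only [conjTranspose_mul, conjTranspose_conjTranspose, Matrix.mul_assoc]
    rw [mcl hV₂, mcl (rectId_mul_conjT hNL), mcl hU₁]
  have hXsXs : Xs * Xsᴴ = (L:ℂ) • Rd := by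
    rw [hXs, conjTranspose_smul, star_trivial, Matrix.smul_mul, Matrix.mul_smul, smul_smul,
      hMM, ← hFact]
    rw [Real.mul_self_sqrt hLpos.le]
    norm_cast
  have part1 : ((L : ℂ))⁻¹ • (Xs * Xsᴴ) = Rd := by
    rw [hXsXs, smul_smul, inv_mul_cancel₀ hLc, one_smul]
  refine ⟨part1, ?_⟩
  intro X hX
  have hXc : X * Xᴴ = (L:ℂ) • Rd := by
    rw [← hX, smul_smul, mul_inv_cancel₀ hLc, one_smul]
  -- constant energy
  have hconst : ∀ Y : Matrix (Fin N) (Fin L) ℂ, Y * Yᴴ = (L:ℂ) • Rd →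
      frobSq (H * Y) = ((L:ℂ) * Matrix.trace (Hᴴ * H * Rd)).re := by
    intro Y hY
    have h1 : (H*Y)ᴴ * (H*Y) = Yᴴ * ((Hᴴ * H) * Y) := by
      simp [conjTranspose_mul, Matrix.mul_assoc]
    rw [frobSq, h1, Matrix.trace_mul_comm, Matrix.mul_assoc, hY, Matrix.mul_smul,
      Matrix.trace_smul]
    simp
  -- SVD consequence
  have hHS : Hᴴ * S = F⁻¹ᴴ * (U * Sg * Vᴴ) := by
    rw [← hSVD, Matrix.mul_assoc Fᴴ, mcl hFHi']
  have hSH : Sᴴ * H = V * (Sgᴴ * (Uᴴ * F⁻¹)) := by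
    have h0 : Sᴴ * H = (Hᴴ * S)ᴴ := by simp [conjTranspose_mul]
    rw [h0, hHS]
    simp [conjTranspose_mul, Matrix.conjTranspose_nonsing_inv, Matrix.mul_assoc]
  have htr : ∀ Y : Matrix (Fin N) (Fin L) ℂ,
      Matrix.trace (Sᴴ * (H * Y)) = Matrix.trace (Sgᴴ * (Uᴴ * (F⁻¹ * (Y * V)))) := by
    intro Y
    rw [← Matrix.mul_assoc, hSH, Matrix.mul_assoc, Matrix.trace_mul_comm]
    simp [Matrix.mul_assoc]
  -- diagonal extraction
  have hdiag : ∀ Wm : Matrix (Fin N) (Fin L) ℂ,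
      Matrix.trace (Sgᴴ * Wm) =
        ∑ i : Fin N, ((Sig i (Fin.castLE hNL i) : ℂ)) * Wm i (Fin.castLE hNL i) := by
    intro Wm
    simp only [Matrix.trace, Matrix.diag, Matrix.mul_apply, conjTranspose_apply]
    rw [Finset.sum_comm]
    refine Finset.sum_congr rfl fun i _ => ?_
    rw [Finset.sum_eq_single (Fin.castLE hNL i)]
    · simp [hSg, Matrix.map_apply]
    · intro j _ hj
      have hne : (i:ℕ) ≠ (j:ℕ) := by
        intro he
        exact hj (by ext; simp [← he])
      simp [hSg, Matrix.map_apply, hSigOff i j hne]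
    · simp
  -- bound on entries of co-isometry
  have hWbound : ∀ Wm : Matrix (Fin N) (Fin L) ℂ, Wm * Wmᴴ = (L:ℂ) • 1 →
      ∀ i : Fin N, (Wm i (Fin.castLE hNL i)).re ≤ Real.sqrt L := by
    intro Wm hWm i
    have hsum : ∑ j : Fin L, Complex.normSq (Wm i j) = L := by
      have h1 : (Wm * Wmᴴ) i i = ((L:ℂ) • (1 : Matrix (Fin N) (Fin N) ℂ)) i i := by rw [hWm]
      have h2 : (Wm * Wmᴴ) i i = ((∑ j : Fin L, Complex.normSq (Wm i j) : ℝ) : ℂ) := by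
        simp only [Matrix.mul_apply, conjTranspose_apply, Complex.ofReal_sum]
        refine Finset.sum_congr rfl fun j _ => ?_
        rw [← Complex.mul_conj]
        rfl
      have h3 : ((L:ℂ) • (1 : Matrix (Fin N) (Fin N) ℂ)) i i = ((L:ℝ) : ℂ) := by
        simp [Matrix.smul_apply, Matrix.one_apply]
      rw [h2, h3] at h1
      exact_mod_cast h1
    have h1 : Complex.normSq (Wm i (Fin.castLE hNL i)) ≤ L := by
      rw [← hsum]
      exact Finset.single_le_sum (fun j _ => Complex.normSq_nonneg _) (Finset.mem_univ _)
    calc (Wm i (Fin.castLE hNL i)).re ≤ ‖Wm i (Fin.castLE hNL i)‖ :=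
          Complex.re_le_norm _
      _ = Real.sqrt (Complex.normSq (Wm i (Fin.castLE hNL i))) := by rw [Complex.norm_def]
      _ ≤ Real.sqrt L := Real.sqrt_le_sqrt h1
  -- W for X is a co-isometry
  have hWX : (Uᴴ * (F⁻¹ * (X * V))) * (Uᴴ * (F⁻¹ * (X * V)))ᴴ = (L:ℂ) • 1 := by
    simp only [conjTranspose_mul, conjTranspose_conjTranspose, Matrix.mul_assoc]
    rw [mcl hV₁, ← Matrix.mul_assoc X Xᴴ, hXc, hFact, Matrix.smul_mul, Matrix.mul_assoc,
      mcl hFHi, Matrix.mul_smul, mcl hFi, Matrix.mul_smul, ← hU₂]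
  -- W for Xs
  have hWXs : Uᴴ * (F⁻¹ * (Xs * V)) = Real.sqrt L • rectId N L := by
    rw [hXs]
    simp only [Matrix.smul_mul, Matrix.mul_smul, Matrix.mul_assoc]
    rw [hV₂, Matrix.mul_one, mcl hFi, mcl hU₂]
  set W : Matrix (Fin N) (Fin L) ℂ := Uᴴ * (F⁻¹ * (X * V)) with hW
  have htrX : (Matrix.trace (Sᴴ * (H * X))).re =
      ∑ i : Fin N, Sig i (Fin.castLE hNL i) * (W i (Fin.castLE hNL i)).re := by
    rw [htr X, hdiag, Complex.re_sum]
    exact Finset.sum_congr rfl fun i _ => Complex.re_ofReal_mul _ _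
  have htrXs : (Matrix.trace (Sᴴ * (H * Xs))).re =
      ∑ i : Fin N, Sig i (Fin.castLE hNL i) * Real.sqrt L := by
    rw [htr Xs, hWXs, hdiag, Complex.re_sum]
    refine Finset.sum_congr rfl fun i _ => ?_
    simp [rectId, Matrix.smul_apply, Complex.real_smul, Complex.re_ofReal_mul]
  have hle : (Matrix.trace (Sᴴ * (H * X))).re ≤ (Matrix.trace (Sᴴ * (H * Xs))).re := by
    rw [htrX, htrXs]
    exact Finset.sum_le_sum fun i _ =>
      mul_le_mul_of_nonneg_left (hWbound W hWX i) (hSigDiag i)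
  have e1 := frobSq_sub (H * Xs) S
  have e2 := frobSq_sub (H * X) S
  have c1 := hconst Xs hXsXs
  have c2 := hconst X hXc
  have hfs : frobSq (H * Xs - S) ≤ frobSq (H * X - S) := by
    rw [e1, e2, c1, c2]
    linarith
  unfold frobNorm
  exact Real.sqrt_le_sqrt hfs
end

section
/- Let Q ∈ ℂ^{N×N} be Hermitian, G ∈ ℂ^{N×L}, c > 0, and suppose there exist λ ∈ ℝ and X ∈ ℂ^{N×L} such that (Q + λ I_N) X = G, ‖X‖_F² = c, and Q + λ I_N is positive semidefinite. Then X is a global minimizer of the trust-region subproblem: for every Y ∈ ℂ^{N×L} with ‖Y‖_F² = c, Re tr(Xᴴ Q X) − 2 Re tr(Xᴴ G) ≤ Re tr(Yᴴ Q Y) − 2 Re tr(Yᴴ G). -/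
open Matrix
open scoped ComplexOrder

lemma trace_re_nonneg_of_posSemidef {n : ℕ} {P : Matrix (Fin n) (Fin n) ℂ}
    (hP : P.PosSemidef) : 0 ≤ (Matrix.trace P).re := by
  have hdiag : ∀ i, 0 ≤ (P i i).re := by
    intro i
    have := hP.dotProduct_mulVec_nonneg (Pi.single i 1)
    simp only [dotProduct, Matrix.mulVec, Pi.star_apply, Pi.single_apply] at this
    have h' : (0 : ℂ) ≤ P i i := by simpa [dotProduct, Matrix.mulVec] using this
    exact (Complex.le_def.mp h').1
  simp only [Matrix.trace, Matrix.diag, Complex.re_sum]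
  exact Finset.sum_nonneg fun i _ => hdiag i

theorem stmt5 {N L : ℕ} (Q : Matrix (Fin N) (Fin N) ℂ) (G : Matrix (Fin N) (Fin L) ℂ)
    (hQ : Q.IsHermitian) (c : ℝ) (hc : 0 < c) (lam : ℝ) (X : Matrix (Fin N) (Fin L) ℂ)
    (hstat : (Q + (lam : ℂ) • 1) * X = G)
    (hfeas : frobSq X = c)
    (hpsd : (Q + (lam : ℂ) • 1).PosSemidef) :
    ∀ Y : Matrix (Fin N) (Fin L) ℂ, frobSq Y = c →
      (Matrix.trace (Xᴴ * Q * X)).re - 2 * (Matrix.trace (Xᴴ * G)).re ≤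
        (Matrix.trace (Yᴴ * Q * Y)).re - 2 * (Matrix.trace (Yᴴ * G)).re := by
  intro Y hY
  set A : Matrix (Fin N) (Fin N) ℂ := Q + (lam : ℂ) • 1 with hA
  have hAH : Aᴴ = A := hpsd.1
  -- key nonnegativity
  have hkey : 0 ≤ (Matrix.trace ((Y - X)ᴴ * A * (Y - X))).re :=
    trace_re_nonneg_of_posSemidef (hpsd.conjTranspose_mul_mul_same (Y - X))
  -- expand the quadratic form
  have hexp : Matrix.trace ((Y - X)ᴴ * A * (Y - X)) =
      Matrix.trace (Yᴴ * A * Y) - Matrix.trace (Yᴴ * A * X)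
      - Matrix.trace (Xᴴ * A * Y) + Matrix.trace (Xᴴ * A * X) := by
    simp only [conjTranspose_sub, Matrix.sub_mul, Matrix.mul_sub, Matrix.trace_sub]
    ring
  -- cross terms have equal real parts
  have hcross : (Matrix.trace (Xᴴ * A * Y)).re = (Matrix.trace (Yᴴ * A * X)).re := by
    have h1 : (Xᴴ * A * Y)ᴴ = Yᴴ * A * X := by
      simp [Matrix.conjTranspose_mul, hAH, Matrix.mul_assoc]
    calc (Matrix.trace (Xᴴ * A * Y)).re
        = (star (Matrix.trace (Xᴴ * A * Y))).re := by simp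
      _ = (Matrix.trace ((Xᴴ * A * Y)ᴴ)).re := by rw [Matrix.trace_conjTranspose]
      _ = (Matrix.trace (Yᴴ * A * X)).re := by rw [h1]
  -- Q in terms of A
  have hQX : (Matrix.trace (Xᴴ * Q * X)).re = (Matrix.trace (Xᴴ * A * X)).re - lam * c := by
    have : Xᴴ * A * X = Xᴴ * Q * X + (lam : ℂ) • (Xᴴ * X) := by
      rw [hA]; simp [Matrix.mul_add, Matrix.add_mul, Matrix.mul_smul, Matrix.smul_mul]
    rw [this]
    have : ((lam : ℂ) * Matrix.trace (Xᴴ * X)).re = lam * c := by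
      rw [← hfeas]; simp [frobSq, Complex.mul_re]
    simp only [Matrix.trace_add, Matrix.trace_smul, Complex.add_re, smul_eq_mul, this]
    ring
  have hQY : (Matrix.trace (Yᴴ * Q * Y)).re = (Matrix.trace (Yᴴ * A * Y)).re - lam * c := by
    have : Yᴴ * A * Y = Yᴴ * Q * Y + (lam : ℂ) • (Yᴴ * Y) := by
      rw [hA]; simp [Matrix.mul_add, Matrix.add_mul, Matrix.mul_smul, Matrix.smul_mul]
    rw [this]
    have : ((lam : ℂ) * Matrix.trace (Yᴴ * Y)).re = lam * c := by
      rw [← hY]; simp [frobSq, Complex.mul_re]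
    simp only [Matrix.trace_add, Matrix.trace_smul, Complex.add_re, smul_eq_mul, this]
    ring
  -- substitute G = A * X
  have hGX : Xᴴ * G = Xᴴ * A * X := by rw [← hstat, hA, Matrix.mul_assoc]
  have hGY : Yᴴ * G = Yᴴ * A * X := by rw [← hstat, hA, Matrix.mul_assoc]
  rw [hGX, hGY, hQX, hQY]
  rw [hexp] at hkey
  simp only [Complex.add_re, Complex.sub_re] at hkey
  linarith [hkey, hcross]
end

section
/- Let l, u ∈ ℝ with 0 < u − l < π. Then the convex hull (over ℝ) of the arc arc(l,u) = {e^{it} : t ∈ [l, u]} ⊆ ℂ equals the circular segment { x ∈ ℂ : |x| ≤ 1 and Re( conj(x) · (e^{iu} + e^{il})/2 ) ≥ cos²((u − l)/2) }. -/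
/-- The arc `{e^{it} : t ∈ [l, u]}` on the unit circle. -/
noncomputable def arc (l u : ℝ) : Set ℂ :=
  (fun t : ℝ => Complex.exp (Complex.I * t)) '' Set.Icc l u

open Complex Real

lemma expI (t : ℝ) : Complex.exp (Complex.I * t) = Real.cos t + Real.sin t * Complex.I := by
  rw [mul_comm, Complex.exp_mul_I]; push_cast; rfl

lemma exp_shift (m d : ℝ) : Complex.exp (Complex.I * ((m + d : ℝ) : ℂ))
    = (↑(Real.cos d) + ↑(Real.sin d) * Complex.I) * Complex.exp (Complex.I * (m : ℝ)) := by
  rw [← expI d, ← Complex.exp_add]; congr 1; push_cast; ring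

lemma combo1 (cδ sδ b : ℝ) (hs : sδ ≠ 0) (e : ℂ) :
    ((sδ - b) / (2 * sδ)) • ((↑cδ - ↑sδ * Complex.I) * e) +
      (1 - (sδ - b) / (2 * sδ)) • ((↑cδ + ↑sδ * Complex.I) * e)
      = (↑cδ + ↑b * Complex.I) * e := by
  rw [Complex.real_smul, Complex.real_smul]
  push_cast
  have hs' : (sδ : ℂ) ≠ 0 := by exact_mod_cast hs
  field_simp
  ring

lemma combo2 (cδ c a b : ℝ) (h : c - cδ ≠ 0) (e : ℂ) :
    (1 - (a - cδ) / (c - cδ)) • ((↑cδ + ↑b * Complex.I) * e) +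
      ((a - cδ) / (c - cδ)) • ((↑c + ↑b * Complex.I) * e)
      = (↑a + ↑b * Complex.I) * e := by
  rw [Complex.real_smul, Complex.real_smul]
  push_cast
  have h' : (c : ℂ) - (cδ : ℂ) ≠ 0 := by
    rw [← Complex.ofReal_sub]; exact_mod_cast h
  field_simp
  ring

set_option maxHeartbeats 1000000 in
theorem stmt9 (l u : ℝ) (h₀ : 0 < u - l) (hπ : u - l < Real.pi) :
    convexHull ℝ (arc l u) =
      {x : ℂ | ‖x‖ ≤ 1 ∧
        Real.cos ((u - l) / 2) ^ 2 ≤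
          ((starRingEnd ℂ) x *
            ((Complex.exp (Complex.I * u) + Complex.exp (Complex.I * l)) / 2)).re} := by
  have pi_pos := Real.pi_pos
  set m : ℝ := (l + u) / 2 with hm
  set δ : ℝ := (u - l) / 2 with hδ
  have hδ0 : 0 < δ := by positivity
  have hδπ : δ < π / 2 := by rw [hδ]; linarith
  have hcosδ : 0 < Real.cos δ := Real.cos_pos_of_mem_Ioo ⟨by linarith, hδπ⟩
  have hsinδ : 0 < Real.sin δ := Real.sin_pos_of_pos_of_lt_pi hδ0 (by linarith)
  have hu : u = m + δ := by rw [hm, hδ]; ring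
  have hl : l = m - δ := by rw [hm, hδ]; ring
  set e : ℂ := Complex.exp (Complex.I * m) with he
  have heU : Complex.exp (Complex.I * u)
      = (↑(Real.cos δ) + ↑(Real.sin δ) * Complex.I) * e := by
    rw [he]; rw [show (u : ℂ) = ((m + δ : ℝ) : ℂ) by rw [hu]]
    exact exp_shift m δ
  have heL : Complex.exp (Complex.I * l)
      = (↑(Real.cos δ) - ↑(Real.sin δ) * Complex.I) * e := by
    rw [he]; rw [show (l : ℂ) = ((m + (-δ) : ℝ) : ℂ) by push_cast [hl]; ring]
    rw [exp_shift m (-δ), Real.cos_neg, Real.sin_neg]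
    push_cast; ring
  -- key rotation identity
  have hkey : Complex.exp (Complex.I * u) + Complex.exp (Complex.I * l)
      = 2 * Real.cos δ * e := by
    rw [heU, heL]; ring
  -- reformulated condition
  have hcond : ∀ x : ℂ,
      (Real.cos δ ^ 2 ≤ ((starRingEnd ℂ) x *
          ((Complex.exp (Complex.I * u) + Complex.exp (Complex.I * l)) / 2)).re)
      ↔ Real.cos δ ≤ ((starRingEnd ℂ) x * e).re := by
    intro x
    rw [hkey]
    have : (starRingEnd ℂ) x * (2 * ↑(Real.cos δ) * e / 2)
        = ↑(Real.cos δ) * ((starRingEnd ℂ) x * e) := by ring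
    rw [this, Complex.re_ofReal_mul, pow_two]
    exact (mul_le_mul_iff_right₀ hcosδ)
  ext x
  simp only [Set.mem_setOf_eq, hcond x]
  constructor
  · -- hull ⊆ segment set
    intro hx
    have hconv : Convex ℝ {x : ℂ | ‖x‖ ≤ 1 ∧
        Real.cos δ ≤ ((starRingEnd ℂ) x * e).re} := by
      have h1 : Convex ℝ {x : ℂ | ‖x‖ ≤ 1} := by
        rw [show {x : ℂ | ‖x‖ ≤ 1} = Metric.closedBall (0 : ℂ) 1 by
          ext z
          simp [Metric.mem_closedBall, Complex.dist_eq]]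
        exact convex_closedBall (0 : ℂ) 1
      have h2 : Convex ℝ {x : ℂ | Real.cos δ ≤ ((starRingEnd ℂ) x * e).re} := by
        apply convex_halfSpace_ge
        constructor
        · intro a b; simp [map_add, add_mul]
        · intro c a
          simp [Complex.real_smul, map_mul, Complex.conj_ofReal, mul_assoc,
            Complex.re_ofReal_mul, smul_eq_mul]
      exact h1.inter h2
    refine convexHull_min ?_ hconv hx
    rintro _ ⟨t, ht, rfl⟩
    constructor
    · rw [Complex.norm_exp]; simp
    · have hthis : (starRingEnd ℂ) (Complex.exp (Complex.I * t)) * e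
          = Complex.exp (Complex.I * ((m - t : ℝ) : ℂ)) := by
        rw [he, ← Complex.exp_conj, ← Complex.exp_add]
        congr 1
        simp only [map_mul, Complex.conj_I, Complex.conj_ofReal]
        push_cast
        ring
      rw [hthis, mul_comm Complex.I, Complex.exp_ofReal_mul_I_re]
      have h1 : Real.cos δ ≤ Real.cos (m - t) := by
        rw [← Real.cos_abs (m - t)]
        apply Real.cos_le_cos_of_nonneg_of_le_pi (abs_nonneg _) (by linarith)
        rw [abs_le]
        constructor
        · have := ht.2; rw [hu] at this; linarith
        · have := ht.1; rw [hl] at this; linarith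
      exact h1
  · -- segment set ⊆ hull
    rintro ⟨hx1, hx2⟩
    set K := convexHull ℝ (arc l u) with hK
    have hKc : Convex ℝ K := convex_convexHull ℝ _
    set y : ℂ := x * Complex.exp (Complex.I * ((-m : ℝ) : ℂ)) with hy
    set a : ℝ := y.re with ha
    set b : ℝ := y.im with hb
    have hee : Complex.exp (Complex.I * ((-m : ℝ) : ℂ)) * e = 1 := by
      rw [he, ← Complex.exp_add, ← Complex.exp_zero]
      congr 1; push_cast; ring
    have hye : y * e = x := by
      rw [hy, mul_assoc, hee, mul_one]
    have hxy : x = (↑a + ↑b * Complex.I) * e := by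
      rw [← hye]; congr 1; exact (Complex.re_add_im y).symm
    -- a ≥ cos δ
    have hconj : ((starRingEnd ℂ) x * e).re = a := by
      have h2 : (starRingEnd ℂ) x * e = (starRingEnd ℂ) y := by
        rw [hy, map_mul, ← Complex.exp_conj, he]
        congr 2
        simp only [map_mul, Complex.conj_I, Complex.conj_ofReal]
        push_cast; ring
      rw [h2, Complex.conj_re]
    rw [hconj] at hx2
    -- a² + b² ≤ 1
    have habs : ‖y‖ ≤ 1 := by
      rw [hy, norm_mul, Complex.norm_exp]
      simp [hx1]
    have hab : a ^ 2 + b ^ 2 ≤ 1 := by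
      have h3 := Complex.sq_norm y
      rw [Complex.normSq_apply] at h3
      nlinarith [norm_nonneg y]
    have ha0 : 0 ≤ a := le_trans hcosδ.le hx2
    -- |b| ≤ sin δ
    have hbsin : b ^ 2 ≤ Real.sin δ ^ 2 := by
      have := Real.sin_sq_add_cos_sq δ
      nlinarith
    have hb1 : -Real.sin δ ≤ b := by nlinarith
    have hb2 : b ≤ Real.sin δ := by nlinarith
    have hbabs1 : (-1 : ℝ) ≤ b := by linarith [Real.sin_le_one δ]
    have hbabs2 : b ≤ 1 := le_trans hb2 (Real.sin_le_one δ)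
    set c : ℝ := Real.sqrt (1 - b ^ 2) with hc
    have hac : a ≤ c := (Real.le_sqrt ha0 (by nlinarith)).mpr (by nlinarith)
    have hcc : Real.cos δ ≤ c := le_trans hx2 hac
    -- the arc point p2
    set s : ℝ := Real.arcsin b with hs
    have hsms : m + s ∈ Set.Icc l u := by
      constructor
      · rw [hl]
        have : -δ ≤ s := by
          rw [hs]
          have := Real.monotone_arcsin hb1
          rwa [Real.arcsin_neg, Real.arcsin_sin (by linarith) (by linarith)] at this
        linarith
      · rw [hu]
        have : s ≤ δ := by
          rw [hs]
          have := Real.monotone_arcsin hb2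
          rwa [Real.arcsin_sin (by linarith) (by linarith)] at this
        linarith
    have hp2 : Complex.exp (Complex.I * ((m + s : ℝ) : ℂ)) = (↑c + ↑b * Complex.I) * e := by
      rw [he, exp_shift m s, hs, Real.cos_arcsin, Real.sin_arcsin hbabs1 hbabs2, ← hc]
    have hp2K : (↑c + ↑b * Complex.I) * e ∈ K := by
      rw [← hp2]
      exact subset_convexHull ℝ _ ⟨m + s, hsms, rfl⟩
    have heLK : Complex.exp (Complex.I * (l : ℝ)) ∈ K :=
      subset_convexHull ℝ _ ⟨l, ⟨le_refl l, by linarith⟩, rfl⟩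
    have heUK : Complex.exp (Complex.I * (u : ℝ)) ∈ K :=
      subset_convexHull ℝ _ ⟨u, ⟨by linarith, le_refl u⟩, rfl⟩
    -- p1 ∈ K
    set lam : ℝ := (Real.sin δ - b) / (2 * Real.sin δ) with hlam
    have hlam0 : 0 ≤ lam := div_nonneg (by linarith) (by linarith)
    have hlam1 : lam ≤ 1 := by
      rw [hlam, div_le_one (by linarith)]; linarith
    have hp1K : (↑(Real.cos δ) + ↑b * Complex.I) * e ∈ K := by
      have h4 := hKc heLK heUK hlam0 (by linarith : (0:ℝ) ≤ 1 - lam) (by ring)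
      rwa [heL, heU, hlam, combo1 _ _ _ (ne_of_gt hsinδ)] at h4
    -- final combination
    rcases eq_or_lt_of_le hcc with hdeg | hlt
    · have hax : a = c := le_antisymm hac (by rw [← hdeg]; exact hx2)
      rw [hxy, hax]
      exact hp2K
    · set μ : ℝ := (a - Real.cos δ) / (c - Real.cos δ) with hμ
      have hμ0 : 0 ≤ μ := div_nonneg (by linarith) (by linarith)
      have hμ1 : μ ≤ 1 := by
        rw [hμ, div_le_one (by linarith)]; linarith
      have h5 := hKc hp1K hp2K (by linarith : (0:ℝ) ≤ 1 - μ) hμ0 (by ring)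
      rwa [hμ, combo2 _ _ _ _ (ne_of_gt (sub_pos.mpr hlt)), ← hxy] at h5
end

section
/- (Lemma 1, ε–δ form.) Let H ∈ ℂ^{K×N} and s ∈ ℂ^{K}. For every δ > 0 there exists η > 0 such that: for all l, u : {1,…,N} → ℝ with 0 ≤ u_n − l_n ≤ η for every n, and all x, y ∈ ℂ^{N} whose entries x_n, y_n both lie in the convex hull (over ℝ) of the arc arc(l_n, u_n) = {e^{it} : t ∈ [l_n, u_n]} ⊆ ℂ for every n, one has |‖Hx − s‖² − ‖Hy − s‖²| ≤ δ. In words, as the maximum angular width of the subregions tends to zero, the gap between the upper and lower bounds of the branch-and-bound subproblem tends uniformly to zero. -/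
open Matrix

lemma chord_le (a b : ℝ) :
    ‖Complex.exp (Complex.I * a) - Complex.exp (Complex.I * b)‖ ≤ |a - b| := by
  have hre : ∀ t : ℝ, Complex.exp (Complex.I * t) = Complex.exp ((t : ℂ) * Complex.I) := by
    intro t; rw [mul_comm]
  have hsq : ‖Complex.exp (Complex.I * a) - Complex.exp (Complex.I * b)‖ ^ 2 ≤ (a - b) ^ 2 := by
    rw [hre, hre, Complex.sq_norm, Complex.normSq_apply,
      Complex.sub_re, Complex.sub_im, Complex.exp_ofReal_mul_I_re,
      Complex.exp_ofReal_mul_I_im, Complex.exp_ofReal_mul_I_re, Complex.exp_ofReal_mul_I_im]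
    have h1 := Real.sin_sq_add_cos_sq a
    have h2 := Real.sin_sq_add_cos_sq b
    have h3 := Real.cos_sub a b
    have h4 := Real.one_sub_sq_div_two_le_cos (x := a - b)
    nlinarith [h1, h2, h3, h4]
  calc ‖Complex.exp (Complex.I * a) - Complex.exp (Complex.I * b)‖
      = Real.sqrt (‖Complex.exp (Complex.I * a) - Complex.exp (Complex.I * b)‖ ^ 2) := by
        rw [Real.sqrt_sq (norm_nonneg _)]
    _ ≤ Real.sqrt ((a - b) ^ 2) := Real.sqrt_le_sqrt hsq
    _ = |a - b| := Real.sqrt_sq_eq_abs _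

lemma euclidean_norm_le {N : ℕ} (v : EuclideanSpace ℂ (Fin N)) (c : ℝ) (hc : 0 ≤ c)
    (h : ∀ n, ‖v n‖ ≤ c) : ‖v‖ ≤ c * Real.sqrt N := by
  rw [EuclideanSpace.norm_eq]
  have : ∑ i, ‖v i‖ ^ 2 ≤ ∑ _i : Fin N, c ^ 2 :=
    Finset.sum_le_sum fun i _ => pow_le_pow_left₀ (norm_nonneg _) (h i) 2
  calc Real.sqrt (∑ i, ‖v i‖ ^ 2) ≤ Real.sqrt (∑ _i : Fin N, c ^ 2) := Real.sqrt_le_sqrt this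
    _ = Real.sqrt ((N : ℝ) * c ^ 2) := by simp [Finset.sum_const, mul_comm]
    _ = c * Real.sqrt N := by
        rw [Real.sqrt_mul (Nat.cast_nonneg N), Real.sqrt_sq hc, mul_comm]

lemma hull_arc_norm_le {l u : ℝ} {z : ℂ} (hz : z ∈ convexHull ℝ (arc l u)) : ‖z‖ ≤ 1 := by
  have : convexHull ℝ (arc l u) ⊆ Metric.closedBall (0 : ℂ) 1 := by
    apply convexHull_min _ (convex_closedBall 0 1)
    rintro w ⟨t, _, rfl⟩
    simp only [Metric.mem_closedBall, dist_zero_right]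
    rw [mul_comm]
    rw [Complex.norm_exp_ofReal_mul_I]
  simpa using this hz

lemma hull_arc_dist_le {l u : ℝ} (hlu : 0 ≤ u - l) {z : ℂ}
    (hz : z ∈ convexHull ℝ (arc l u)) : ‖z - Complex.exp (Complex.I * l)‖ ≤ u - l := by
  have : convexHull ℝ (arc l u) ⊆ Metric.closedBall (Complex.exp (Complex.I * l)) (u - l) := by
    apply convexHull_min _ (convex_closedBall _ _)
    rintro w ⟨t, ht, rfl⟩
    simp only [Metric.mem_closedBall, dist_eq_norm]
    calc ‖Complex.exp (Complex.I * t) - Complex.exp (Complex.I * l)‖ ≤ |t - l| := chord_le t l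
      _ ≤ u - l := by rw [abs_of_nonneg (by linarith [ht.1])]; linarith [ht.2]
  have := this hz
  simpa [dist_eq_norm] using this

theorem stmt14 {K N : ℕ} (H : Matrix (Fin K) (Fin N) ℂ) (s : EuclideanSpace ℂ (Fin K)) :
    ∀ δ : ℝ, 0 < δ → ∃ η : ℝ, 0 < η ∧
      ∀ l u : Fin N → ℝ, (∀ n, 0 ≤ u n - l n ∧ u n - l n ≤ η) →
        ∀ x y : EuclideanSpace ℂ (Fin N),
          (∀ n, x n ∈ convexHull ℝ (arc (l n) (u n)) ∧
                y n ∈ convexHull ℝ (arc (l n) (u n))) →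
          |‖Matrix.toEuclideanLin H x - s‖ ^ 2 - ‖Matrix.toEuclideanLin H y - s‖ ^ 2| ≤ δ := by
  intro δ hδ
  set T : EuclideanSpace ℂ (Fin N) →L[ℂ] EuclideanSpace ℂ (Fin K) :=
    LinearMap.toContinuousLinearMap (Matrix.toEuclideanLin H) with hT
  have hTapp : ∀ v : EuclideanSpace ℂ (Fin N), T v = Matrix.toEuclideanLin H v := fun v => rfl
  set C := ‖T‖ with hC
  set R := Real.sqrt N with hR
  have hC0 : 0 ≤ C := norm_nonneg _
  have hR0 : 0 ≤ R := Real.sqrt_nonneg _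
  set M := C * R + ‖s‖ with hM
  have hM0 : 0 ≤ M := by positivity
  set B := 4 * C * R * M + 1 with hB
  have hB0 : 0 < B := by positivity
  refine ⟨δ / B, div_pos hδ hB0, ?_⟩
  intro l u hlu x y hxy
  have hη0 : 0 ≤ δ / B := le_of_lt (div_pos hδ hB0)
  -- entrywise bounds
  have hxn : ∀ n, ‖x n‖ ≤ 1 := fun n => hull_arc_norm_le (hxy n).1
  have hyn : ∀ n, ‖y n‖ ≤ 1 := fun n => hull_arc_norm_le (hxy n).2
  have hdiff : ∀ n, ‖x n - y n‖ ≤ 2 * (δ / B) := by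
    intro n
    have h1 := hull_arc_dist_le (hlu n).1 (hxy n).1
    have h2 := hull_arc_dist_le (hlu n).1 (hxy n).2
    calc ‖x n - y n‖
        = ‖(x n - Complex.exp (Complex.I * l n)) - (y n - Complex.exp (Complex.I * l n))‖ := by
          ring_nf
      _ ≤ ‖x n - Complex.exp (Complex.I * l n)‖ + ‖y n - Complex.exp (Complex.I * l n)‖ :=
          norm_sub_le _ _
      _ ≤ (u n - l n) + (u n - l n) := add_le_add h1 h2
      _ ≤ 2 * (δ / B) := by linarith [(hlu n).2]
  -- vector norm bounds
  have hxnorm : ‖x‖ ≤ R := by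
    have := euclidean_norm_le x 1 zero_le_one hxn; simpa using this
  have hynorm : ‖y‖ ≤ R := by
    have := euclidean_norm_le y 1 zero_le_one hyn; simpa using this
  have hxy_norm : ‖x - y‖ ≤ 2 * (δ / B) * R := by
    apply euclidean_norm_le (x - y) (2 * (δ / B)) (by positivity)
    intro n
    simpa using hdiff n
  set a := Matrix.toEuclideanLin H x - s with ha
  set b := Matrix.toEuclideanLin H y - s with hb
  have hab : a - b = T (x - y) := by
    rw [map_sub, hTapp, hTapp, ha, hb]; abel
  have habn : ‖a - b‖ ≤ C * (2 * (δ / B) * R) := by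
    rw [hab]
    calc ‖T (x - y)‖ ≤ C * ‖x - y‖ := T.le_opNorm _
      _ ≤ C * (2 * (δ / B) * R) := by
          apply mul_le_mul_of_nonneg_left hxy_norm hC0
  have han : ‖a‖ ≤ M := by
    calc ‖a‖ ≤ ‖Matrix.toEuclideanLin H x‖ + ‖s‖ := norm_sub_le _ _
      _ ≤ C * ‖x‖ + ‖s‖ := by
          rw [← hTapp]; exact add_le_add (T.le_opNorm _) le_rfl
      _ ≤ C * R + ‖s‖ := by
          exact add_le_add (mul_le_mul_of_nonneg_left hxnorm hC0) le_rfl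
  have hbn : ‖b‖ ≤ M := by
    calc ‖b‖ ≤ ‖Matrix.toEuclideanLin H y‖ + ‖s‖ := norm_sub_le _ _
      _ ≤ C * ‖y‖ + ‖s‖ := by
          rw [← hTapp]; exact add_le_add (T.le_opNorm _) le_rfl
      _ ≤ C * R + ‖s‖ := by
          exact add_le_add (mul_le_mul_of_nonneg_left hynorm hC0) le_rfl
  have hkey : |‖a‖ - ‖b‖| ≤ ‖a - b‖ := abs_norm_sub_norm_le a b
  have ha0 : 0 ≤ ‖a‖ := norm_nonneg _
  have hb0 : 0 ≤ ‖b‖ := norm_nonneg _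
  have hfactor : |‖a‖ ^ 2 - ‖b‖ ^ 2| = |‖a‖ - ‖b‖| * (‖a‖ + ‖b‖) := by
    rw [← abs_of_nonneg (by linarith : (0:ℝ) ≤ ‖a‖ + ‖b‖), ← abs_mul]
    ring_nf
  rw [hfactor]
  calc |‖a‖ - ‖b‖| * (‖a‖ + ‖b‖) ≤ (C * (2 * (δ / B) * R)) * (2 * M) := by
        apply mul_le_mul (le_trans hkey habn) (by linarith) (by linarith) (by positivity)
    _ = (4 * C * R * M) * (δ / B) := by ring
    _ ≤ B * (δ / B) := by
        apply mul_le_mul_of_nonneg_right _ hη0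
        rw [hB]; linarith
    _ = δ := by field_simp
end

section
/- (Correctness of the arc projector PR₁, endpoint case.) Let l, u ∈ ℝ with 0 ≤ u − l ≤ 2π, let r > 0 and θ ∈ ℝ with u ≤ θ ≤ (l + u)/2 + π, and set x = r·e^{iθ}. Then for every t ∈ [l, u]: |x − e^{iu}| ≤ |x − e^{it}|, i.e. the nearest point to x on the arc arc(l,u) = {e^{it} : t ∈ [l, u]} is the endpoint e^{iu}. -/
theorem stmt15 (l u : ℝ) (h₀ : 0 ≤ u - l) (h₂π : u - l ≤ 2 * Real.pi)
    (r : ℝ) (hr : 0 < r) (θ : ℝ) (hθl : u ≤ θ) (hθu : θ ≤ (l + u) / 2 + Real.pi)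
    (x : ℂ) (hx : x = (r : ℂ) * Complex.exp (Complex.I * θ)) :
    ∀ t ∈ Set.Icc l u,
      ‖x - Complex.exp (Complex.I * u)‖ ≤
        ‖x - Complex.exp (Complex.I * t)‖ := by
  intro t ht
  obtain ⟨htl, htu⟩ := ht
  have key : ∀ s : ℝ, ‖x - Complex.exp (Complex.I * s)‖ ^ 2
      = r ^ 2 + 1 - 2 * r * Real.cos (θ - s) := by
    intro s
    have hes : Complex.exp (Complex.I * s) = Real.cos s + Real.sin s * Complex.I := by
      rw [mul_comm, Complex.exp_mul_I, Complex.ofReal_cos, Complex.ofReal_sin]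
    have heθ : Complex.exp (Complex.I * θ) = Real.cos θ + Real.sin θ * Complex.I := by
      rw [mul_comm, Complex.exp_mul_I, Complex.ofReal_cos, Complex.ofReal_sin]
    rw [hx, hes, heθ, Complex.sq_norm, Complex.normSq_apply]
    simp [Real.cos_sub, Complex.cos_ofReal_re, Complex.sin_ofReal_re]
    have h1 := Real.sin_sq_add_cos_sq s
    have h2 := Real.sin_sq_add_cos_sq θ
    ring_nf
    nlinarith [h1, h2]
  have hcos : Real.cos (θ - t) ≤ Real.cos (θ - u) := by
    have hdiff : Real.cos (θ - u) - Real.cos (θ - t)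
        = -2 * Real.sin (θ - (u + t) / 2) * Real.sin ((t - u) / 2) := by
      rw [Real.cos_sub_cos]; ring_nf
    have h1 : 0 ≤ Real.sin (θ - (u + t) / 2) := by
      apply Real.sin_nonneg_of_nonneg_of_le_pi <;> nlinarith
    have h2 : Real.sin ((t - u) / 2) ≤ 0 := by
      apply Real.sin_nonpos_of_nonpos_of_neg_pi_le <;> nlinarith
    nlinarith
  have h1 := key u
  have h2 := key t
  nlinarith [norm_nonneg (x - Complex.exp (Complex.I * u)),
    norm_nonneg (x - Complex.exp (Complex.I * t))]
end

section
/- (Correctness of the projector PR₂ in the chord region.) Let l, u ∈ ℝ with 0 < u − l < π, and set A = e^{il}, B = e^{iu}, T = (A + B)/2 (so T ≠ 0). Let X ∈ ℂ satisfy Re( conj(T)·(X − T) ) ≤ 0, Re( conj(A − B)·(X − A) ) ≤ 0, and Re( conj(B − A)·(X − B) ) ≤ 0. Define X_T = X − ( Re( conj(T)·(X − T) ) / |T|² )·T, the orthogonal projection of X onto the chord line through A and B. Then X_T belongs to the convex hull (over ℝ) of the arc arc(l,u) = {e^{it} : t ∈ [l, u]} ⊆ ℂ, and for every q in that convex hull,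 |X − X_T| ≤ |X − q|; that is, X_T is the nearest point of the convex hull to X. -/
set_option maxHeartbeats 1600000 in
theorem stmt16 (l u : ℝ) (h₀ : 0 < u - l) (hπ : u - l < Real.pi)
    (A B T : ℂ) (hA : A = Complex.exp (Complex.I * l)) (hB : B = Complex.exp (Complex.I * u))
    (hT : T = (A + B) / 2)
    (X : ℂ)
    (h₁ : ((starRingEnd ℂ) T * (X - T)).re ≤ 0)
    (h₄ : ((starRingEnd ℂ) (A - B) * (X - A)).re ≤ 0)
    (h₅ : ((starRingEnd ℂ) (B - A) * (X - B)).re ≤ 0)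
    (XT : ℂ)
    (hXT : XT = X - ((((starRingEnd ℂ) T * (X - T)).re / ‖T‖ ^ 2) : ℝ) • T) :
    XT ∈ convexHull ℝ (arc l u) ∧
      ∀ q ∈ convexHull ℝ (arc l u), ‖X - XT‖ ≤ ‖X - q‖ := by
  set δ : ℝ := (u - l) / 2 with hδdef
  set m : ℝ := (u + l) / 2 with hmdef
  set E : ℂ := Complex.exp (Complex.I * m) with hEdef
  set c : ℝ := Real.cos δ with hcdef
  set σ : ℝ := Real.sin δ with hσdef
  have hδ1 : 0 < δ := by simp [hδdef]; linarith
  have hδ2 : δ < Real.pi / 2 := by simp only [hδdef]; linarith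
  have hπpos := Real.pi_pos
  have hc : 0 < c := Real.cos_pos_of_mem_Ioo ⟨by linarith, hδ2⟩
  have hσ : 0 < σ := Real.sin_pos_of_pos_of_lt_pi hδ1 (by linarith)
  have hEE : (starRingEnd ℂ) E * E = 1 := by
    rw [hEdef, ← Complex.exp_conj, ← Complex.exp_add]; simp
  -- key real-part computation in the orthonormal frame (E, I*E)
  have key : ∀ a b e d : ℝ, ((starRingEnd ℂ) ((a:ℂ)*E + (b:ℂ)*(Complex.I*E)) *
      ((e:ℂ)*E + (d:ℂ)*(Complex.I*E))).re = a*e + b*d := by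
    intro a b e d
    have h1 : (starRingEnd ℂ) ((a:ℂ)*E + (b:ℂ)*(Complex.I*E)) * ((e:ℂ)*E + (d:ℂ)*(Complex.I*E))
        = ((a*e + b*d : ℝ) : ℂ) + ((a*d - b*e : ℝ) : ℂ) * Complex.I := by
      simp only [map_add, map_mul, Complex.conj_ofReal, Complex.conj_I]
      push_cast
      linear_combination (((a:ℂ)*e + b*d) + ((a:ℂ)*d - b*e)*Complex.I) * hEE
        - ((b:ℂ)*d) * ((starRingEnd ℂ) E * E) * Complex.I_sq
    rw [h1]; simp
  have hsub : ∀ a b e d : ℝ, ((a:ℂ)*E + (b:ℂ)*(Complex.I*E)) - ((e:ℂ)*E + (d:ℂ)*(Complex.I*E))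
      = ((a-e : ℝ):ℂ)*E + ((b-d:ℝ):ℂ)*(Complex.I*E) := by intros; push_cast; ring
  set x₁ : ℝ := ((starRingEnd ℂ) E * X).re with hx1def
  set x₂ : ℝ := ((starRingEnd ℂ) E * X).im with hx2def
  have hX : X = (x₁:ℂ)*E + (x₂:ℂ)*(Complex.I*E) := by
    have h1 : ((x₁:ℂ) + (x₂:ℂ)*Complex.I) = (starRingEnd ℂ) E * X := Complex.re_add_im _
    have h2 : X = ((starRingEnd ℂ) E * X) * E := by
      rw [mul_comm ((starRingEnd ℂ) E) X, mul_assoc, hEE, mul_one]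
    rw [h2, ← h1]; ring
  have hexp : ∀ t : ℝ, Complex.exp (Complex.I * t)
      = ((Real.cos (t - m) : ℝ):ℂ) * E + ((Real.sin (t - m) : ℝ):ℂ) * (Complex.I * E) := by
    intro t
    have h1 : Complex.I * (t:ℂ) = Complex.I * (m:ℂ) + ((t - m : ℝ):ℂ) * Complex.I := by
      push_cast; ring
    rw [h1, Complex.exp_add, Complex.exp_mul_I, ← hEdef]
    push_cast; ring
  have hA' : A = (c:ℂ)*E + ((-σ : ℝ):ℂ)*(Complex.I*E) := by
    rw [hA, hexp l]
    have h1 : l - m = -δ := by rw [hδdef, hmdef]; ring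
    rw [h1, Real.cos_neg, Real.sin_neg, ← hcdef, ← hσdef]
  have hB' : B = (c:ℂ)*E + ((σ : ℝ):ℂ)*(Complex.I*E) := by
    rw [hB, hexp u]
    have h1 : u - m = δ := by rw [hδdef, hmdef]; ring
    rw [h1, ← hcdef, ← hσdef]
  have hT' : T = (c:ℂ)*E + ((0 : ℝ):ℂ)*(Complex.I*E) := by
    rw [hT, hA', hB']; push_cast; ring
  have habsE : ‖E‖ = 1 := by
    rw [hEdef, Complex.norm_exp]; simp
  have habsT : ‖T‖ ^ 2 = c ^ 2 := by
    have : T = (c:ℂ) * E := by rw [hT']; push_cast; ring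
    rw [this, norm_mul, habsE, Complex.norm_of_nonneg hc.le, mul_one]
  have hnum : ((starRingEnd ℂ) T * (X - T)).re = c * (x₁ - c) := by
    rw [hT', hX, hsub]
    rw [key]
    ring
  have hx1c : x₁ ≤ c := by
    rw [hnum] at h₁; nlinarith
  have hXT' : XT = (c:ℂ)*E + (x₂:ℂ)*(Complex.I*E) := by
    rw [hXT, hnum, habsT, hX, hT', Complex.real_smul]
    have hcne : (c:ℂ) ≠ 0 := by exact_mod_cast hc.ne'
    push_cast
    field_simp
    ring
  have hx2a : -σ ≤ x₂ := by
    have h := h₄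
    rw [hA', hB', hX] at h
    rw [hsub, hsub, key] at h
    nlinarith
  have hx2b : x₂ ≤ σ := by
    have h := h₅
    rw [hA', hB', hX] at h
    rw [hsub, hsub, key] at h
    nlinarith
  have hAmem : A ∈ arc l u := ⟨l, ⟨le_refl l, by linarith⟩, hA.symm⟩
  have hBmem : B ∈ arc l u := ⟨u, ⟨by linarith, le_refl u⟩, hB.symm⟩
  constructor
  · -- XT is a convex combination of A and B
    have ha : (0:ℝ) ≤ (σ - x₂) / (2*σ) := by
      apply div_nonneg (by linarith) (by linarith)
    have hb : (0:ℝ) ≤ (σ + x₂) / (2*σ) := by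
      apply div_nonneg (by linarith) (by linarith)
    have hab : (σ - x₂) / (2*σ) + (σ + x₂) / (2*σ) = 1 := by
      field_simp; ring
    have hcomb : ((σ - x₂) / (2*σ)) • A + ((σ + x₂) / (2*σ)) • B = XT := by
      rw [hA', hB', hXT', Complex.real_smul, Complex.real_smul]
      have hσne : (σ:ℂ) ≠ 0 := by exact_mod_cast hσ.ne'
      push_cast
      field_simp
      ring
    rw [← hcomb]
    exact (convex_convexHull ℝ (arc l u))
      (subset_convexHull ℝ _ hAmem) (subset_convexHull ℝ _ hBmem) ha hb hab
  · -- distance minimization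
    intro q hq
    -- the halfspace containing the arc
    have hCconv : Convex ℝ {z : ℂ | c ≤ ((starRingEnd ℂ) E * z).re} := by
      intro p hp r hr a b ha hb hab
      simp only [Set.mem_setOf_eq] at *
      have heq : (starRingEnd ℂ) E * (a • p + b • r)
          = a • ((starRingEnd ℂ) E * p) + b • ((starRingEnd ℂ) E * r) := by
        simp only [Complex.real_smul]; ring
      rw [heq]
      simp only [Complex.add_re, Complex.smul_re, smul_eq_mul]
      nlinarith [mul_le_mul_of_nonneg_left hp ha, mul_le_mul_of_nonneg_left hr hb]
    have harcC : arc l u ⊆ {z : ℂ | c ≤ ((starRingEnd ℂ) E * z).re} := by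
      rintro z ⟨t, ⟨ht1, ht2⟩, rfl⟩
      simp only [Set.mem_setOf_eq]
      rw [hexp t]
      have h1 : ((starRingEnd ℂ) E * (((Real.cos (t - m) : ℝ):ℂ) * E
          + ((Real.sin (t - m) : ℝ):ℂ) * (Complex.I * E))).re = Real.cos (t - m) := by
        have h2 := key 1 0 (Real.cos (t - m)) (Real.sin (t - m))
        push_cast at h2 ⊢
        simpa using h2
      rw [h1]
      rw [← Real.cos_abs (t - m)]
      apply Real.cos_le_cos_of_nonneg_of_le_pi (abs_nonneg _) (by linarith)
      rw [abs_le]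
      constructor <;> simp only [hδdef, hmdef] <;> linarith
    have hq1 : c ≤ ((starRingEnd ℂ) E * q).re := convexHull_min harcC hCconv hq
    set q₁ : ℝ := ((starRingEnd ℂ) E * q).re with hq1def
    set q₂ : ℝ := ((starRingEnd ℂ) E * q).im with hq2def
    have hQ : q = (q₁:ℂ)*E + (q₂:ℂ)*(Complex.I*E) := by
      have ha1 : ((q₁:ℂ) + (q₂:ℂ)*Complex.I) = (starRingEnd ℂ) E * q := Complex.re_add_im _
      have ha2 : q = ((starRingEnd ℂ) E * q) * E := by
        rw [mul_comm ((starRingEnd ℂ) E) q, mul_assoc, hEE, mul_one]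
      rw [ha2, ← ha1]; ring
    have habs2 : ∀ a b : ℝ, ‖(a:ℂ)*E + (b:ℂ)*(Complex.I*E)‖
        = Real.sqrt (a^2 + b^2) := by
      intro a b
      rw [Complex.norm_def]
      congr 1
      have h4 : ((starRingEnd ℂ) ((a:ℂ)*E + (b:ℂ)*(Complex.I*E)) * ((a:ℂ)*E + (b:ℂ)*(Complex.I*E))).re
          = Complex.normSq ((a:ℂ)*E + (b:ℂ)*(Complex.I*E)) := by
        rw [mul_comm, Complex.mul_conj, Complex.ofReal_re]
      rw [← h4, key]; ring
    have hXXT : X - XT = ((x₁ - c : ℝ):ℂ)*E + ((0:ℝ):ℂ)*(Complex.I*E) := by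
      rw [hX, hXT', hsub]; norm_num
    have hXq : X - q = ((x₁ - q₁ : ℝ):ℂ)*E + ((x₂ - q₂:ℝ):ℂ)*(Complex.I*E) := by
      rw [hX, hQ, hsub]
    rw [hXXT, hXq, habs2, habs2]
    apply Real.sqrt_le_sqrt
    have hfin : ∀ xa xc xq d : ℝ, xa ≤ xc → xc ≤ xq →
        (xa - xc)^2 + (0:ℝ)^2 ≤ (xa - xq)^2 + d^2 := by
      intro xa xc xq d hh1 hh2
      nlinarith [sq_nonneg d, sq_nonneg (xq - xc), mul_nonneg (sub_nonneg.2 hh2) (sub_nonneg.2 hh1)]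
    exact hfin x₁ c q₁ (x₂ - q₂) hx1c hq1
end

section
/- (Correctness of the projector PR₂ in the normalization region.) Let l, u ∈ ℝ with 0 ≤ u − l ≤ 2π, let r ≥ 1 and θ ∈ [l, u], and set X = r·e^{iθ}. Then e^{iθ} belongs to the convex hull (over ℝ) of the arc arc(l,u) = {e^{it} : t ∈ [l, u]} ⊆ ℂ, and for every q in that convex hull, |X − e^{iθ}| ≤ |X − q|; i.e. for points outside the unit circle whose argument lies in [l,u], the nearest point of the convex hull of the arc is the normalization X/|X| = e^{iθ}. -/
theorem stmt17 (l u : ℝ) (h₀ : 0 ≤ u - l) (h₂π : u - l ≤ 2 * Real.pi)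
    (r : ℝ) (hr : 1 ≤ r) (θ : ℝ) (hθ : θ ∈ Set.Icc l u)
    (X : ℂ) (hX : X = (r : ℂ) * Complex.exp (Complex.I * θ)) :
    Complex.exp (Complex.I * θ) ∈ convexHull ℝ (arc l u) ∧
      ∀ q ∈ convexHull ℝ (arc l u),
        ‖X - Complex.exp (Complex.I * θ)‖ ≤ ‖X - q‖ := by
  have habs : ∀ t : ℝ, ‖Complex.exp (Complex.I * t)‖ = 1 := by
    intro t
    rw [Complex.norm_exp]
    simp
  constructor
  · exact subset_convexHull ℝ _ ⟨θ, hθ, rfl⟩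
  · intro q hq
    have hq1 : ‖q‖ ≤ 1 := by
      have hsub : convexHull ℝ (arc l u) ⊆ Metric.closedBall (0 : ℂ) 1 := by
        apply convexHull_min _ (convex_closedBall _ _)
        rintro z ⟨t, _, rfl⟩
        simp [Complex.dist_eq, habs t]
      have := hsub hq
      simpa [Complex.dist_eq] using this
    have h1 : ‖X - Complex.exp (Complex.I * θ)‖ = r - 1 := by
      rw [hX, ← sub_one_mul, norm_mul, habs θ]
      rw [mul_one, show ((r : ℂ) - 1) = ((r - 1 : ℝ) : ℂ) by push_cast; ring,
        Complex.norm_real, Real.norm_eq_abs]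
      exact abs_of_nonneg (by linarith)
    have hXabs : ‖X‖ = r := by
      rw [hX, norm_mul, habs θ, mul_one, Complex.norm_real, Real.norm_eq_abs]
      exact abs_of_nonneg (by linarith)
    have := norm_sub_norm_le X q
    rw [h1]
    linarith
end
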